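/- arXiv:1507.07160 — 6 statements merged into one kernel-verified Lean document; each statement's English description precedes it below -/
import Mathlib

section
/- Let V : [0,∞) → [0,∞) solve V'(t) = -μ(V(t)) with μ continuous, μ(0)=0, μ(v)>0 for v>0. If T := ∫₀^∞ 1/μ(v) dv < ∞, then for every initial value V(0) ≥ 0 (arbitrarily large), V(t) = 0 for all t ≥ T. That is, the settling time is bounded by T uniformly in the initial condition (fixed-time stability). -/
open MeasureTheory

theorem fixed_time_stability
    (V μ : ℝ → ℝ)
    (hμc : Continuous μ) (hμ0 : μ 0 = 0)
    (hμpos : ∀ v > (0:ℝ), 0 < μ v)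
    (hVnn : ∀ t ≥ (0:ℝ), 0 ≤ V t)
    (hode : ∀ t ≥ (0:ℝ), HasDerivAt V (-(μ (V t))) t)
    (hint : IntegrableOn (fun v => 1 / μ v) (Set.Ioi 0))
    (T : ℝ) (hT : T = ∫ v in Set.Ioi 0, 1 / μ v) :
    ∀ t ≥ T, V t = 0 := by
  have hμnn : ∀ v ≥ (0:ℝ), 0 ≤ μ v := by
    intro v hv
    rcases eq_or_lt_of_le hv with h | h
    · rw [← h, hμ0]
    · exact (hμpos v h).le
  have hnn : ∀ v ∈ Set.Ioi (0:ℝ), 0 ≤ 1 / μ v :=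
    fun v hv => le_of_lt (div_pos one_pos (hμpos v hv))
  have hT0 : 0 ≤ T := by
    rw [hT]; exact setIntegral_nonneg measurableSet_Ioi hnn
  -- V is antitone on [0, ∞)
  have hVcont : ContinuousOn V (Set.Ici 0) :=
    fun t ht => ((hode t ht).continuousAt).continuousWithinAt
  have hVanti : AntitoneOn V (Set.Ici 0) := by
    apply antitoneOn_of_deriv_nonpos (convex_Ici 0) hVcont
    · intro t ht
      rw [interior_Ici] at ht
      exact ((hode t ht.le).differentiableAt).differentiableWithinAt
    · intro t ht
      rw [interior_Ici] at ht
      rw [(hode t ht.le).deriv]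
      exact neg_nonpos.2 (hμnn _ (hVnn t ht.le))
  -- it suffices to show V T = 0
  suffices hVT : V T = 0 by
    intro t ht
    have h1 : V t ≤ V T := hVanti (Set.mem_Ici.2 hT0) (Set.mem_Ici.2 (hT0.trans ht)) ht
    have h2 : 0 ≤ V t := hVnn t (hT0.trans ht)
    linarith [hVT ▸ h1]
  by_contra hne
  have hVTpos : 0 < V T := lt_of_le_of_ne (hVnn T hT0) (Ne.symm hne)
  -- the primitive G
  set G : ℝ → ℝ := fun x => ∫ v in (0:ℝ)..x, 1 / μ v with hGdef
  have hII : ∀ x : ℝ, 0 ≤ x → IntervalIntegrable (fun v => 1 / μ v) volume 0 x := by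
    intro x hx
    rw [intervalIntegrable_iff_integrableOn_Ioc_of_le hx]
    exact hint.mono_set Set.Ioc_subset_Ioi_self
  have hmeas : AEStronglyMeasurable (fun v => 1 / μ v) volume :=
    (measurable_const.div hμc.measurable).aestronglyMeasurable
  have hGderiv : ∀ x : ℝ, 0 < x → HasDerivAt G (1 / μ x) x := by
    intro x hx
    exact intervalIntegral.integral_hasDerivAt_right (hII x hx.le)
      ⟨Set.univ, Filter.univ_mem, hmeas.restrict⟩
      (continuousAt_const.div hμc.continuousAt (ne_of_gt (hμpos x hx)))
  -- on [0, T], V s ≥ V T > 0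
  have hVs : ∀ s ∈ Set.Icc (0:ℝ) T, 0 < V s := by
    intro s hs
    exact lt_of_lt_of_le hVTpos (hVanti (Set.mem_Ici.2 hs.1) (Set.mem_Ici.2 hT0) hs.2)
  -- F s = G (V s) + s has derivative 0 on [0, T]
  have hF : ∀ s ∈ Set.Icc (0:ℝ) T, HasDerivAt (fun s => G (V s) + s) 0 s := by
    intro s hs
    have h1 : HasDerivAt (fun s => G (V s)) (1 / μ (V s) * (-(μ (V s)))) s :=
      (hGderiv (V s) (hVs s hs)).comp s (hode s hs.1)
    have hμne : μ (V s) ≠ 0 := ne_of_gt (hμpos _ (hVs s hs))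
    have h2 : 1 / μ (V s) * (-(μ (V s))) = -1 := by
      field_simp
    rw [h2] at h1
    have := h1.add (hasDerivAt_id s)
    exact this.congr_deriv (by norm_num)
  have hconst : G (V T) + T = G (V 0) + 0 := by
    have := constant_of_has_deriv_right_zero
      (f := fun s => G (V s) + s) (a := 0) (b := T)
      (fun s hs => (hF s hs).continuousAt.continuousWithinAt)
      (fun s hs => ((hF s ⟨hs.1, hs.2.le⟩).hasDerivWithinAt))
    exact this T (Set.mem_Icc.2 ⟨hT0, le_refl T⟩)
  -- G (V T) > 0
  have hGpos : 0 < G (V T) := by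
    apply intervalIntegral.intervalIntegral_pos_of_pos_on (hII _ hVTpos.le)
      (fun x hx => div_pos one_pos (hμpos x hx.1)) hVTpos
  -- G (V 0) ≤ T
  have hGle : G (V 0) ≤ T := by
    have hV00 : 0 ≤ V 0 := hVnn 0 le_rfl
    rw [hGdef, hT]
    simp only
    rw [intervalIntegral.integral_of_le hV00]
    apply setIntegral_mono_set hint
    · exact (ae_restrict_iff' measurableSet_Ioi).2 (ae_of_all _ hnn)
    · exact HasSubset.Subset.eventuallyLE Set.Ioc_subset_Ioi_self
  linarith
end

section
/- Let a > 0 and μ₁, μ₂ : [0,∞) → [0,∞) be continuous with μ₁(0) = 0, μ₁(v) > 0 for 0 < v < a, μ₂(v) > 0 for v ≥ a, ω₁ := ∫₀^a dv/μ₁(v) < ∞ and ω₂ := ∫_a^∞ dv/μ₂(v) < ∞. Suppose V : [0,∞) → [0,∞) is absolutely continuous and satisfies V'(t) ≤ -μ₁(V(t)) whenever 0 < V(t) < a and V'(t) ≤ -μ₂(V(t)) whenever V(t) ≥ a. Then V(t) = 0 for all t ≥ ω₁ + ω₂, regardless of the initial value V(0). -/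
open MeasureTheory

/-- Key comparison lemma: if `V' t ≤ -μ (V t)` on `[u, w]` with `μ (V t) > 0` there, then
`t + ∫ c..V t, 1/μ` is antitone, in particular compared at the two endpoints. -/
lemma key_decay_aux (μ : ℝ → ℝ) (hμc : Continuous μ) (c : ℝ) (V V' : ℝ → ℝ)
    (u w : ℝ) (huw : u ≤ w)
    (hd : ∀ t ∈ Set.Icc u w, HasDerivAt V (V' t) t)
    (hpos : ∀ t ∈ Set.Icc u w, 0 < μ (V t))
    (hint : ∀ t ∈ Set.Icc u w, IntervalIntegrable (fun v => 1 / μ v) volume c (V t))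
    (hdec : ∀ t ∈ Set.Icc u w, V' t ≤ -μ (V t)) :
    w + ∫ v in c..(V w), 1 / μ v ≤ u + ∫ v in c..(V u), 1 / μ v := by
  set g : ℝ → ℝ := fun t => t + ∫ v in c..(V t), 1 / μ v with hg
  have hder : ∀ t ∈ Set.Icc u w, HasDerivAt g (1 + (1 / μ (V t)) * V' t) t := by
    intro t ht
    have hne : μ (V t) ≠ 0 := (hpos t ht).ne'
    have hF : HasDerivAt (fun x => ∫ v in c..x, 1 / μ v) (1 / μ (V t)) (V t) :=
      intervalIntegral.integral_hasDerivAt_right (hint t ht)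
        ((measurable_const.div hμc.measurable).aestronglyMeasurable.stronglyMeasurableAtFilter)
        (continuousAt_const.div hμc.continuousAt hne)
    exact (hasDerivAt_id t).add (hF.comp t (hd t ht))
  have hle : ∀ t ∈ Set.Icc u w, 1 + (1 / μ (V t)) * V' t ≤ 0 := by
    intro t ht
    have hm := hpos t ht
    have h1m : 0 < 1 / μ (V t) := by positivity
    have h2 : (1 / μ (V t)) * V' t ≤ (1 / μ (V t)) * (-μ (V t)) :=
      mul_le_mul_of_nonneg_left (hdec t ht) h1m.le
    have h3 : (1 / μ (V t)) * (-μ (V t)) = -1 := by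
      field_simp
    linarith
  have hanti : AntitoneOn g (Set.Icc u w) :=
    antitoneOn_of_deriv_nonpos (convex_Icc u w)
      (fun t ht => (hder t ht).continuousAt.continuousWithinAt)
      (fun t ht =>
        ((hder t (interior_subset ht)).differentiableAt).differentiableWithinAt)
      (fun t ht => by
        rw [(hder t (interior_subset ht)).deriv]
        exact hle t (interior_subset ht))
  exact hanti (Set.left_mem_Icc.2 huw) (Set.right_mem_Icc.2 huw) huw

theorem piecewise_fixed_time_stability
    (a : ℝ) (ha : 0 < a)
    (μ₁ μ₂ : ℝ → ℝ) (hμ₁c : Continuous μ₁) (hμ₂c : Continuous μ₂)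
    (hμ₁0 : μ₁ 0 = 0)
    (hμ₁pos : ∀ v, 0 < v → v < a → 0 < μ₁ v)
    (hμ₂pos : ∀ v, a ≤ v → 0 < μ₂ v)
    (hμ₁nn : ∀ v ≥ (0:ℝ), 0 ≤ μ₁ v) (hμ₂nn : ∀ v ≥ (0:ℝ), 0 ≤ μ₂ v)
    (hint₁ : IntegrableOn (fun v => 1 / μ₁ v) (Set.Ioc 0 a))
    (hint₂ : IntegrableOn (fun v => 1 / μ₂ v) (Set.Ioi a))
    (ω₁ ω₂ : ℝ)
    (hω₁ : ω₁ = ∫ v in Set.Ioc 0 a, 1 / μ₁ v)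
    (hω₂ : ω₂ = ∫ v in Set.Ioi a, 1 / μ₂ v)
    (V V' : ℝ → ℝ) (hVnn : ∀ t ≥ (0:ℝ), 0 ≤ V t)
    (hd : ∀ t ≥ (0:ℝ), HasDerivAt V (V' t) t)
    (h1 : ∀ t ≥ (0:ℝ), 0 < V t → V t < a → V' t ≤ -μ₁ (V t))
    (h2 : ∀ t ≥ (0:ℝ), a ≤ V t → V' t ≤ -μ₂ (V t)) :
    ∀ t ≥ ω₁ + ω₂, V t = 0 := by
  -- basic positivity of ω₁ and ω₂
  have hμ₁m : Measurable fun v => 1 / μ₁ v := measurable_const.div hμ₁c.measurable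
  have hμ₂m : Measurable fun v => 1 / μ₂ v := measurable_const.div hμ₂c.measurable
  have hii₁ : ∀ x : ℝ, 0 ≤ x → x ≤ a → IntervalIntegrable (fun v => 1 / μ₁ v) volume 0 x := by
    intro x hx0 hx
    exact (intervalIntegrable_iff_integrableOn_Ioc_of_le hx0).2
      (hint₁.mono_set (Set.Ioc_subset_Ioc_right hx))
  have hii₂ : ∀ x : ℝ, a ≤ x → IntervalIntegrable (fun v => 1 / μ₂ v) volume a x := by
    intro x hx
    exact (intervalIntegrable_iff_integrableOn_Ioc_of_le hx).2
      (hint₂.mono_set Set.Ioc_subset_Ioi_self)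
  have hω₁pos : 0 < ω₁ := by
    rw [hω₁, ← intervalIntegral.integral_of_le ha.le]
    refine intervalIntegral.intervalIntegral_pos_of_pos_on (hii₁ a ha.le le_rfl) ?_ ha
    intro v hv
    exact one_div_pos.2 (hμ₁pos v hv.1 hv.2)
  have hnn₂ae : (0:ℝ → ℝ) ≤ᵐ[volume.restrict (Set.Ioi a)] fun v => 1 / μ₂ v := by
    refine (ae_restrict_iff' measurableSet_Ioi).2 (Filter.Eventually.of_forall ?_)
    intro v hv
    exact one_div_nonneg.2 (hμ₂nn v (le_of_lt (lt_trans ha hv)))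
  have hnn₁ae : (0:ℝ → ℝ) ≤ᵐ[volume.restrict (Set.Ioc 0 a)] fun v => 1 / μ₁ v := by
    refine (ae_restrict_iff' measurableSet_Ioc).2 (Filter.Eventually.of_forall ?_)
    intro v hv
    exact one_div_nonneg.2 (hμ₁nn v hv.1.le)
  have hω₂pos : 0 < ω₂ := by
    have h1' : (0:ℝ) < ∫ v in Set.Ioc a (a + 1), 1 / μ₂ v := by
      rw [← intervalIntegral.integral_of_le (by linarith : a ≤ a + 1)]
      refine intervalIntegral.intervalIntegral_pos_of_pos_on (hii₂ (a+1) (by linarith)) ?_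
        (by linarith)
      intro v hv
      exact one_div_pos.2 (hμ₂pos v hv.1.le)
    have h2' : (∫ v in Set.Ioc a (a+1), 1 / μ₂ v) ≤ ∫ v in Set.Ioi a, 1 / μ₂ v :=
      setIntegral_mono_set hint₂ hnn₂ae (HasSubset.Subset.eventuallyLE Set.Ioc_subset_Ioi_self)
    rw [hω₂]; linarith
  intro t₀ ht₀
  by_contra hne
  have ht₀0 : 0 ≤ t₀ := le_trans (by linarith) ht₀
  have hVt₀ : 0 < V t₀ := (hVnn t₀ ht₀0).lt_of_ne (Ne.symm hne)
  -- V is positive on [0, t₀]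
  have hposIcc : ∀ s ∈ Set.Icc (0:ℝ) t₀, 0 < V s := by
    by_contra hcon
    push_neg at hcon
    obtain ⟨r, hr, hVr⟩ := hcon
    set S : Set ℝ := {x | x ∈ Set.Icc (0:ℝ) t₀ ∧ V x = 0} with hS
    have hrS : r ∈ S := ⟨hr, le_antisymm hVr (hVnn r hr.1)⟩
    have hSne : S.Nonempty := ⟨r, hrS⟩
    have hSbdd : BddAbove S := ⟨t₀, fun x hx => hx.1.2⟩
    -- S is closed: use the continuous extension V ∘ (max · 0)
    have hW : Continuous fun x : ℝ => V (max x 0) := by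
      have hm : Continuous fun x : ℝ => max x 0 := continuous_id.max continuous_const
      rw [continuous_iff_continuousAt]
      intro x
      exact ContinuousAt.comp ((hd (max x 0) (le_max_right x 0)).continuousAt) hm.continuousAt
    have hSclosed : IsClosed S := by
      have : S = Set.Icc (0:ℝ) t₀ ∩ (fun x : ℝ => V (max x 0)) ⁻¹' {0} := by
        ext x
        simp only [hS, Set.mem_setOf_eq, Set.mem_inter_iff, Set.mem_preimage,
          Set.mem_singleton_iff]
        constructor
        · rintro ⟨hx, hVx⟩; exact ⟨hx, by rw [max_eq_left hx.1]; exact hVx⟩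
        · rintro ⟨hx, hVx⟩; exact ⟨hx, by rwa [max_eq_left hx.1] at hVx⟩
      rw [this]
      exact isClosed_Icc.inter (isClosed_singleton.preimage hW)
    obtain ⟨u, huS, hub⟩ : ∃ u, u ∈ S ∧ ∀ x ∈ S, x ≤ u :=
      ⟨sSup S, hSclosed.csSup_mem hSne hSbdd, fun x hx => le_csSup hSbdd hx⟩
    have hu0 : (0:ℝ) ≤ u := huS.1.1
    have hVu : V u = 0 := huS.2
    have hut₀ : u < t₀ := lt_of_le_of_ne huS.1.2 (by rintro rfl; exact hVt₀.ne' hVu)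
    have hIoc : ∀ x ∈ Set.Ioc u t₀, 0 < V x := by
      intro x hx
      by_contra hx'
      push_neg at hx'
      have hx0 : (0:ℝ) ≤ x := le_trans hu0 hx.1.le
      have : x ∈ S := ⟨⟨hx0, hx.2⟩, le_antisymm hx' (hVnn x hx0)⟩
      exact absurd (hub x this) (not_le.2 hx.1)
    -- V is strictly decreasing on [u, t₀]
    have hanti : StrictAntiOn V (Set.Icc u t₀) := by
      refine strictAntiOn_of_deriv_neg (convex_Icc u t₀) ?_ ?_
      · intro x hx
        exact ((hd x (le_trans hu0 hx.1)).continuousAt).continuousWithinAt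
      · intro x hx
        rw [interior_Icc] at hx
        have hx0 : (0:ℝ) ≤ x := le_trans hu0 hx.1.le
        rw [(hd x hx0).deriv]
        have hVx : 0 < V x := hIoc x ⟨hx.1, hx.2.le⟩
        rcases lt_or_ge (V x) a with hlt | hge
        · exact lt_of_le_of_lt (h1 x hx0 hVx hlt) (neg_neg_iff_pos.2 (hμ₁pos _ hVx hlt))
        · exact lt_of_le_of_lt (h2 x hx0 hge) (neg_neg_iff_pos.2 (hμ₂pos _ hge))
    -- V t₀ ≤ lim_{x → u⁺} V x = 0, contradiction
    have htend : Filter.Tendsto V (nhdsWithin u (Set.Ioi u)) (nhds 0) := by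
      have := (hd u hu0).continuousAt.tendsto
      rw [hVu] at this
      exact this.mono_left nhdsWithin_le_nhds
    have hev : ∀ᶠ x in nhdsWithin u (Set.Ioi u), V t₀ ≤ V x := by
      filter_upwards [Ioo_mem_nhdsGT hut₀] with x hx
      exact (hanti ⟨hx.1.le, hx.2.le⟩ ⟨hut₀.le, le_rfl⟩ hx.2).le
    have : V t₀ ≤ 0 := ge_of_tendsto htend hev
    exact absurd this (not_le.2 hVt₀)
  -- V is strictly decreasing on [0, t₀]
  have hanti : StrictAntiOn V (Set.Icc 0 t₀) := by
    refine strictAntiOn_of_deriv_neg (convex_Icc 0 t₀) ?_ ?_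
    · intro x hx
      exact ((hd x hx.1).continuousAt).continuousWithinAt
    · intro x hx
      rw [interior_Icc] at hx
      rw [(hd x hx.1.le).deriv]
      have hVx : 0 < V x := hposIcc x ⟨hx.1.le, hx.2.le⟩
      rcases lt_or_ge (V x) a with hlt | hge
      · exact lt_of_le_of_lt (h1 x hx.1.le hVx hlt) (neg_neg_iff_pos.2 (hμ₁pos _ hVx hlt))
      · exact lt_of_le_of_lt (h2 x hx.1.le hge) (neg_neg_iff_pos.2 (hμ₂pos _ hge))
  have hω₂mem : ω₂ ∈ Set.Icc (0:ℝ) t₀ := ⟨hω₂pos.le, by linarith⟩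
  -- Step A: V ω₂ ≤ a
  have hstepA : V ω₂ ≤ a := by
    by_contra hA
    push_neg at hA
    have hge : ∀ t ∈ Set.Icc (0:ℝ) ω₂, a ≤ V t := by
      intro t ht
      have htmem : t ∈ Set.Icc (0:ℝ) t₀ := ⟨ht.1, le_trans ht.2 hω₂mem.2⟩
      rcases eq_or_lt_of_le ht.2 with h | h
      · rw [h]; exact hA.le
      · exact le_trans hA.le (hanti htmem hω₂mem h).le
    have hkey := key_decay_aux μ₂ hμ₂c a V V' 0 ω₂ hω₂pos.le
      (fun t ht => hd t ht.1)
      (fun t ht => hμ₂pos _ (hge t ht))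
      (fun t ht => hii₂ (V t) (hge t ht))
      (fun t ht => h2 t ht.1 (hge t ht))
    have hV0a : a ≤ V 0 := hge 0 ⟨le_rfl, hω₂pos.le⟩
    have hI0 : (∫ v in a..(V 0), 1 / μ₂ v) ≤ ω₂ := by
      rw [intervalIntegral.integral_of_le hV0a, hω₂]
      exact setIntegral_mono_set hint₂ hnn₂ae
        (HasSubset.Subset.eventuallyLE Set.Ioc_subset_Ioi_self)
    have hIω₂ : 0 < ∫ v in a..(V ω₂), 1 / μ₂ v := by
      refine intervalIntegral.intervalIntegral_pos_of_pos_on (hii₂ (V ω₂) hA.le) ?_ hA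
      intro v hv
      exact one_div_pos.2 (hμ₂pos v hv.1.le)
    linarith
  have hω₂lt : ω₂ < t₀ := by linarith
  have hVt₀a : V t₀ < a :=
    lt_of_lt_of_le (hanti hω₂mem ⟨ht₀0, le_rfl⟩ hω₂lt) hstepA
  set ε := ∫ v in (0:ℝ)..(V t₀), 1 / μ₁ v with hε
  have hεpos : 0 < ε := by
    refine intervalIntegral.intervalIntegral_pos_of_pos_on (hii₁ (V t₀) hVt₀.le hVt₀a.le) ?_ hVt₀
    intro v hv
    exact one_div_pos.2 (hμ₁pos v hv.1 (lt_trans hv.2 hVt₀a))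
  -- Step B: for any s ∈ (ω₂, t₀), t₀ + ε ≤ s + ω₁
  have hkeyB : ∀ s, ω₂ < s → s < t₀ → t₀ + ε ≤ s + ω₁ := by
    intro s hs hst
    have hs0 : (0:ℝ) ≤ s := le_trans hω₂pos.le hs.le
    have hsmem : s ∈ Set.Icc (0:ℝ) t₀ := ⟨hs0, hst.le⟩
    have hVsa : V s < a := lt_of_lt_of_le (hanti hω₂mem hsmem hs) hstepA
    have hbnd : ∀ t ∈ Set.Icc s t₀, 0 < V t ∧ V t < a := by
      intro t ht
      have htmem : t ∈ Set.Icc (0:ℝ) t₀ := ⟨le_trans hs0 ht.1, ht.2⟩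
      refine ⟨hposIcc t htmem, ?_⟩
      rcases eq_or_lt_of_le ht.1 with h | h
      · rw [← h]; exact hVsa
      · exact lt_trans (hanti hsmem htmem h) hVsa
    have hkey := key_decay_aux μ₁ hμ₁c 0 V V' s t₀ hst.le
      (fun t ht => hd t (le_trans hs0 ht.1))
      (fun t ht => hμ₁pos _ (hbnd t ht).1 (hbnd t ht).2)
      (fun t ht => hii₁ (V t) (hbnd t ht).1.le (hbnd t ht).2.le)
      (fun t ht => h1 t (le_trans hs0 ht.1) (hbnd t ht).1 (hbnd t ht).2)
    have hIs : (∫ v in (0:ℝ)..(V s), 1 / μ₁ v) ≤ ω₁ := by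
      rw [intervalIntegral.integral_of_le (hposIcc s hsmem).le, hω₁]
      exact setIntegral_mono_set hint₁ hnn₁ae
        (HasSubset.Subset.eventuallyLE (Set.Ioc_subset_Ioc_right hVsa.le))
    linarith
  -- take the limit s → ω₂⁺
  have hlim : t₀ + ε ≤ ω₂ + ω₁ := by
    by_contra hcon
    push_neg at hcon
    set c := t₀ + ε - ω₁ with hc
    have hcω₂ : ω₂ < c := by linarith
    set s := (ω₂ + min c t₀) / 2 with hsdef
    have hmin : ω₂ < min c t₀ := lt_min hcω₂ hω₂lt
    have hs1 : ω₂ < s := by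
      have := min_le_left c t₀
      simp only [hsdef]; linarith
    have hs2 : s < t₀ := by
      have := min_le_right c t₀
      simp only [hsdef]; linarith
    have hs3 : s < c := by
      have := min_le_left c t₀
      simp only [hsdef]; linarith
    have := hkeyB s hs1 hs2
    simp only [hc] at hs3
    linarith
  linarith
end

section
/- Let μ : [0,∞) → [0,∞) be continuous, positive on (0,∞), with μ(0)=0, and suppose v ↦ v/μ(v) is monotone increasing on (0,∞). Let V : [0,∞) → [0,∞) be absolutely continuous with V(0) > 0 satisfying V'(t) ≤ 2δ V(t) - c μ(V(t)) for constants δ ≥ 0, c > 0 with c > 2δ · V(0)/μ(V(0)). Then V'(t) ≤ -(c - 2δ V(0)/μ(V(0))) μ(V(t)) for all t, and consequently V(t) = 0 for all t ≥ (c - 2δ V(0)/μ(V(0)))^{-1} ∫₀^{V(0)} dv/μ(v), provided this integral is finite. -/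
open MeasureTheory

theorem finite_time_with_drift
    (μ : ℝ → ℝ) (hμc : Continuous μ) (hμ0 : μ 0 = 0)
    (hμpos : ∀ v > (0:ℝ), 0 < μ v)
    (hratio : ∀ u v : ℝ, 0 < u → u ≤ v → u / μ u ≤ v / μ v)
    (δ c : ℝ) (hδ : 0 ≤ δ) (hc : 0 < c)
    (hdom : 2 * δ * (V₀ / μ V₀) < c)
    (V V' : ℝ → ℝ) (hV0 : V 0 = V₀) (hV0pos : 0 < V₀)
    (hVnn : ∀ t ≥ (0:ℝ), 0 ≤ V t)
    (hd : ∀ t ≥ (0:ℝ), HasDerivAt V (V' t) t)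
    (hineq : ∀ t ≥ (0:ℝ), V' t ≤ 2 * δ * V t - c * μ (V t)) :
    (∀ t ≥ (0:ℝ), V' t ≤ -(c - 2 * δ * (V₀ / μ V₀)) * μ (V t)) ∧
    (IntegrableOn (fun v => 1 / μ v) (Set.Ioc 0 V₀) →
      ∀ t ≥ (c - 2 * δ * (V₀ / μ V₀))⁻¹ * ∫ v in Set.Ioc 0 V₀, 1 / μ v,
        V t = 0) := by
  have hμV₀ : 0 < μ V₀ := hμpos V₀ hV0pos
  set ε : ℝ := c - 2 * δ * (V₀ / μ V₀) with hεdef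
  have hεpos : 0 < ε := sub_pos.mpr hdom
  -- key pointwise bound, assuming V t ≤ V₀
  have key : ∀ t ≥ (0:ℝ), V t ≤ V₀ → V' t ≤ -ε * μ (V t) := by
    intro t ht hle
    rcases eq_or_lt_of_le (hVnn t ht) with h0 | hpos
    · have : V' t ≤ 2 * δ * V t - c * μ (V t) := hineq t ht
      rw [← h0, hμ0] at this ⊢
      simpa using this
    · have hμVt : 0 < μ (V t) := hμpos _ hpos
      have hr : V t / μ (V t) ≤ V₀ / μ V₀ := hratio _ _ hpos hle
      have h1 : 2 * δ * V t ≤ 2 * δ * (V₀ / μ V₀) * μ (V t) := by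
        have h2 : V t / μ (V t) * μ (V t) ≤ V₀ / μ V₀ * μ (V t) :=
          mul_le_mul_of_nonneg_right hr hμVt.le
        rw [div_mul_cancel₀ _ (ne_of_gt hμVt)] at h2
        nlinarith
      have h3 := hineq t ht
      rw [hεdef]
      nlinarith [h1, h3]
  -- V never exceeds V₀
  have hVcontAt : ∀ t ≥ (0:ℝ), ContinuousAt V t := fun t ht => (hd t ht).continuousAt
  have hVle : ∀ t ≥ (0:ℝ), V t ≤ V₀ := by
    intro t ht
    by_contra hgt
    push_neg at hgt
    set S : Set ℝ := {u | u ∈ Set.Icc 0 t ∧ V u ≤ V₀} with hSdef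
    have hS0 : (0:ℝ) ∈ S := ⟨⟨le_refl 0, ht⟩, le_of_eq hV0⟩
    have hSne : S.Nonempty := ⟨0, hS0⟩
    have hSbdd : BddAbove S := ⟨t, fun u hu => hu.1.2⟩
    have hScl : IsClosed S := by
      have hcont : ContinuousOn V (Set.Icc 0 t) := fun u hu =>
        (hVcontAt u hu.1).continuousWithinAt
      have : S = Set.Icc 0 t ∩ V ⁻¹' Set.Iic V₀ := by
        ext u; simp [hSdef, Set.mem_inter_iff, and_comm]
      rw [this]
      exact hcont.preimage_isClosed_of_isClosed isClosed_Icc isClosed_Iic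
    set s := sSup S with hsdef
    have hsS : s ∈ S := hScl.csSup_mem hSne hSbdd
    have hs0 : 0 ≤ s := hsS.1.1
    have hst : s < t := by
      rcases eq_or_lt_of_le hsS.1.2 with h | h
      · exact absurd (h ▸ hsS.2) (not_le.mpr hgt)
      · exact h
    have hout : ∀ u, u ∈ Set.Ioc s t → V₀ < V u := by
      intro u hu
      by_contra hle'
      push_neg at hle'
      have : u ∈ S := ⟨⟨hs0.trans hu.1.le, hu.2⟩, hle'⟩
      exact absurd (le_csSup hSbdd this) (not_le.mpr hu.1)
    -- V s ≥ V₀ by right continuity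
    have hVsge : V₀ ≤ V s := by
      have htend : Filter.Tendsto V (nhdsWithin s (Set.Ioi s)) (nhds (V s)) :=
        (hVcontAt s hs0).continuousWithinAt.tendsto
      have hev : ∀ᶠ u in nhdsWithin s (Set.Ioi s), V₀ ≤ V u := by
        filter_upwards [Ioc_mem_nhdsGT_of_mem ⟨le_refl s, hst⟩] with u hu
        exact (hout u hu).le
      exact ge_of_tendsto htend hev
    have hVs : V s = V₀ := le_antisymm hsS.2 hVsge
    have hV's : V' s < 0 := by
      have := key s hs0 hsS.2
      have hμVs : 0 < μ (V s) := by rw [hVs]; exact hμV₀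
      calc V' s ≤ -ε * μ (V s) := this
        _ < 0 := by
          have := mul_pos hεpos hμVs
          linarith
    -- slope argument
    have hslope : Filter.Tendsto (slope V s) (nhdsWithin s {s}ᶜ) (nhds (V' s)) :=
      hasDerivAt_iff_tendsto_slope.mp (hd s hs0)
    have hslope' : Filter.Tendsto (slope V s) (nhdsWithin s (Set.Ioi s)) (nhds (V' s)) :=
      hslope.mono_left (nhdsWithin_mono s (fun u hu => ne_of_gt hu))
    have hev : ∀ᶠ u in nhdsWithin s (Set.Ioi s), slope V s u < 0 :=
      hslope'.eventually_lt_const hV's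
    have hmem : Set.Ioc s t ∈ nhdsWithin s (Set.Ioi s) :=
      Ioc_mem_nhdsGT_of_mem ⟨le_refl s, hst⟩
    obtain ⟨u, hu1, hu2⟩ := (hev.and (Filter.eventually_of_mem hmem (fun u hu => hu))).exists
    have husn : u - s > 0 := sub_pos.mpr hu2.1
    have : V u - V s < 0 := by
      have := hu1
      rw [slope_def_field] at this
      have := (div_neg_iff.mp this)
      rcases this with ⟨h1, h2⟩ | ⟨h1, h2⟩
      · linarith
      · linarith
    rw [hVs] at this
    have := hout u hu2
    linarith
  have part1 : ∀ t ≥ (0:ℝ), V' t ≤ -ε * μ (V t) := fun t ht => key t ht (hVle t ht)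
  constructor
  · exact part1
  -- second part
  intro hint t htT
  have hμnnV : ∀ u ≥ (0:ℝ), 0 ≤ μ (V u) := by
    intro u hu
    rcases eq_or_lt_of_le (hVnn u hu) with h0 | hpos
    · rw [← h0, hμ0]
    · exact (hμpos _ hpos).le
  -- V is antitone on [0, ∞)
  have hanti : AntitoneOn V (Set.Ici 0) := by
    apply antitoneOn_of_deriv_nonpos (convex_Ici 0)
      (fun u hu => (hVcontAt u hu).continuousWithinAt)
    · intro u hu
      rw [interior_Ici] at hu
      exact (hd u (le_of_lt hu)).differentiableAt.differentiableWithinAt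
    · intro u hu
      rw [interior_Ici] at hu
      rw [(hd u hu.le).deriv]
      have h1 := part1 u hu.le
      have h2 := hμnnV u hu.le
      nlinarith
  set I : ℝ := ∫ v in Set.Ioc 0 V₀, 1 / μ v with hIdef
  have hInn : 0 ≤ I := by
    apply setIntegral_nonneg measurableSet_Ioc
    intro v hv
    exact (one_div_pos.mpr (hμpos v hv.1)).le
  set T : ℝ := ε⁻¹ * I with hTdef
  have hT0 : 0 ≤ T := mul_nonneg (inv_nonneg.mpr hεpos.le) hInn
  have ht0 : 0 ≤ t := hT0.trans htT
  -- the antiderivative G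
  set G : ℝ → ℝ := fun v => ∫ x in (0:ℝ)..v, 1 / μ x with hGdef
  have hGint : ∀ v, 0 < v → v ≤ V₀ → IntervalIntegrable (fun x => 1 / μ x) volume 0 v := by
    intro v hv hvV₀
    rw [intervalIntegrable_iff_integrableOn_Ioc_of_le hv.le]
    exact hint.mono_set (Set.Ioc_subset_Ioc_right hvV₀)
  have hGderiv : ∀ v, 0 < v → v ≤ V₀ → HasDerivAt G (1 / μ v) v := by
    intro v hv hvV₀
    apply intervalIntegral.integral_hasDerivAt_right (hGint v hv hvV₀)
    · exact (measurable_const.div hμc.measurable).stronglyMeasurable.stronglyMeasurableAtFilter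
    · exact continuousAt_const.div hμc.continuousAt (ne_of_gt (hμpos v hv))
  have hGpos : ∀ v, 0 < v → v ≤ V₀ → 0 < G v := by
    intro v hv hvV₀
    apply intervalIntegral.intervalIntegral_pos_of_pos_on (hGint v hv hvV₀)
      (fun x hx => one_div_pos.mpr (hμpos x hx.1)) hv
  have hGV₀ : G V₀ = I := intervalIntegral.integral_of_le hV0pos.le
  -- there is a zero of V in [0, T]
  have hzero : ∃ s ∈ Set.Icc (0:ℝ) T, V s = 0 := by
    by_contra hno
    push_neg at hno
    have hpos : ∀ u ∈ Set.Icc (0:ℝ) T, 0 < V u := fun u hu =>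
      lt_of_le_of_ne (hVnn u hu.1) (Ne.symm (hno u hu))
    set g : ℝ → ℝ := fun u => G (V u) + ε * u with hgdef
    have hgderiv : ∀ u ∈ Set.Icc (0:ℝ) T, HasDerivAt g (1 / μ (V u) * V' u + ε) u := by
      intro u hu
      have h1 : HasDerivAt (fun w => G (V w)) (1 / μ (V u) * V' u) u :=
        (hGderiv (V u) (hpos u hu) (hVle u hu.1)).comp u (hd u hu.1)
      have h3 := h1.add ((hasDerivAt_id u).const_mul ε)
      simp only [mul_one] at h3
      exact h3
    have hganti : AntitoneOn g (Set.Icc 0 T) := by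
      apply antitoneOn_of_deriv_nonpos (convex_Icc 0 T)
        (fun u hu => (hgderiv u hu).continuousAt.continuousWithinAt)
      · intro u hu
        rw [interior_Icc] at hu
        exact (hgderiv u (Set.mem_Icc_of_Ioo hu)).differentiableAt.differentiableWithinAt
      · intro u hu
        rw [interior_Icc] at hu
        have hu' := Set.mem_Icc_of_Ioo hu
        rw [(hgderiv u hu').deriv]
        have h1 := part1 u hu'.1
        have hμu : 0 < μ (V u) := hμpos _ (hpos u hu')
        have : 1 / μ (V u) * V' u ≤ 1 / μ (V u) * (-ε * μ (V u)) :=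
          mul_le_mul_of_nonneg_left h1 (one_div_pos.mpr hμu).le
        have h2 : 1 / μ (V u) * (-ε * μ (V u)) = -ε := by field_simp
        linarith [h2 ▸ this]
    have hgTg0 : g T ≤ g 0 := hganti ⟨le_refl 0, hT0⟩ ⟨hT0, le_refl T⟩ hT0
    have hεT : ε * T = I := by
      rw [hTdef]; field_simp
    have hg0 : g 0 = I := by
      simp [hgdef, hV0, hGV₀]
    have hgT : g T = G (V T) + I := by
      have h' : g T = G (V T) + ε * T := rfl
      rw [h', hεT]
    have hGVT : 0 < G (V T) :=
      hGpos (V T) (hpos T ⟨hT0, le_refl T⟩) (hVle T hT0)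
    rw [hgT, hg0] at hgTg0
    linarith
  obtain ⟨s, hs, hVs⟩ := hzero
  have : V t ≤ V s := hanti hs.1 ht0 (hs.2.trans htT)
  have := hVnn t ht0
  linarith [hVs ▸ this]
end

section
/- Let ν : [0,∞) → [0,∞) be continuous and positive on (0,∞) with v ↦ v/ν(v) monotone decreasing on (0,∞), and ∫₁^∞ dv/ν(v) < ∞. Suppose V : [0,∞) → [0,∞) is absolutely continuous with V(0) > 1 and V'(t) ≤ 2δ V(t) - c ν(V(t)) whenever V(t) ≥ 1, where c > 2δ/ν(1). Then V(t*) ≤ 1 for t* = (c - 2δ/ν(1))^{-1} ∫₁^∞ dv/ν(v), uniformly in V(0). -/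
open MeasureTheory

theorem fixed_time_large_values_phase
    (ν : ℝ → ℝ) (hνc : Continuous ν)
    (hνpos : ∀ v > (0:ℝ), 0 < ν v)
    (hratio : ∀ u v : ℝ, 0 < u → u ≤ v → v / ν v ≤ u / ν u)
    (hint : IntegrableOn (fun v => 1 / ν v) (Set.Ioi 1))
    (δ c : ℝ) (hδ : 0 ≤ δ) (hc : 2 * δ / ν 1 < c)
    (V V' : ℝ → ℝ) (hVnn : ∀ t ≥ (0:ℝ), 0 ≤ V t) (hV0 : 1 < V 0)
    (hd : ∀ t ≥ (0:ℝ), HasDerivAt V (V' t) t)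
    (hineq : ∀ t ≥ (0:ℝ), 1 ≤ V t → V' t ≤ 2 * δ * V t - c * ν (V t))
    (tstar : ℝ)
    (htstar : tstar = (c - 2 * δ / ν 1)⁻¹ * ∫ v in Set.Ioi 1, 1 / ν v) :
    V tstar ≤ 1 := by
  set κ : ℝ := c - 2 * δ / ν 1 with hκdef
  have hν1 : 0 < ν 1 := hνpos 1 one_pos
  have hκ : 0 < κ := sub_pos.mpr hc
  have hInn : 0 ≤ ∫ v in Set.Ioi 1, (1 / ν v) := by
    apply setIntegral_nonneg measurableSet_Ioi
    intro v hv
    have := hνpos v (lt_trans one_pos hv)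
    positivity
  have htnn : 0 ≤ tstar := by
    rw [htstar]
    exact mul_nonneg (inv_nonneg.mpr hκ.le) hInn
  have hIt : κ * tstar = ∫ v in Set.Ioi 1, (1 / ν v) := by
    rw [htstar, ← mul_assoc, mul_inv_cancel₀ hκ.ne', one_mul]
  set F : ℝ → ℝ := fun x => ∫ v in (1:ℝ)..x, 1 / ν v with hFdef
  have hII : ∀ x : ℝ, 1 ≤ x → IntervalIntegrable (fun v => 1 / ν v) volume 1 x := by
    intro x hx
    apply ContinuousOn.intervalIntegrable
    intro v hv
    rw [Set.uIcc_of_le hx] at hv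
    have hv0 : 0 < v := lt_of_lt_of_le one_pos hv.1
    exact (continuousAt_const.div hνc.continuousAt (hνpos v hv0).ne').continuousWithinAt
  have hFderiv : ∀ x : ℝ, 1 ≤ x → HasDerivAt F (1 / ν x) x := by
    intro x hx
    apply intervalIntegral.integral_hasDerivAt_right (hII x hx)
    · exact ⟨Set.univ, Filter.univ_mem,
        ((measurable_const.div hνc.measurable)).aestronglyMeasurable⟩
    · exact continuousAt_const.div hνc.continuousAt (hνpos x (lt_of_lt_of_le one_pos hx)).ne'
  have hFle : ∀ x : ℝ, 1 ≤ x → F x ≤ κ * tstar := by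
    intro x hx
    rw [hIt, hFdef]
    simp only
    rw [intervalIntegral.integral_of_le hx]
    apply setIntegral_mono_set hint
    · filter_upwards [ae_restrict_mem measurableSet_Ioi] with v hv
      have := hνpos v (lt_trans one_pos hv)
      positivity
    · exact (Set.Ioc_subset_Ioi_self).eventuallyLE
  have hFpos : ∀ x : ℝ, 1 < x → 0 < F x := by
    intro x hx
    apply intervalIntegral.intervalIntegral_pos_of_pos_on (hII x hx.le) _ hx
    intro v hv
    have := hνpos v (lt_trans one_pos hv.1)
    positivity
  have hF1 : F 1 = 0 := intervalIntegral.integral_same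
  have main : ∀ a, a ∈ Set.Icc 0 tstar → (∀ t ∈ Set.Icc a tstar, 1 ≤ V t) →
      F (V tstar) + κ * tstar ≤ F (V a) + κ * a := by
    intro a ha hge
    set φ : ℝ → ℝ := fun t => F (V t) + κ * t with hφdef
    have hderiv : ∀ t ∈ Set.Icc a tstar, HasDerivAt φ (1 / ν (V t) * V' t + κ) t := by
      intro t ht
      have ht0 : (0:ℝ) ≤ t := le_trans ha.1 ht.1
      have hcomp : HasDerivAt (fun s => F (V s)) (1 / ν (V t) * V' t) t :=
        (hFderiv (V t) (hge t ht)).comp t (hd t ht0)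
      have hlin : HasDerivAt (fun y : ℝ => κ * y) κ t := by
        simpa using (hasDerivAt_id t).const_mul κ
      exact hcomp.add hlin
    have hnp : ∀ t ∈ Set.Icc a tstar, 1 / ν (V t) * V' t + κ ≤ 0 := by
      intro t ht
      have ht0 : (0:ℝ) ≤ t := le_trans ha.1 ht.1
      have hVt : 1 ≤ V t := hge t ht
      have hn : 0 < ν (V t) := hνpos _ (lt_of_lt_of_le one_pos hVt)
      have hV' : V' t ≤ 2 * δ * V t - c * ν (V t) := hineq t ht0 hVt
      have hr : V t / ν (V t) ≤ 1 / ν 1 := hratio 1 (V t) one_pos hVt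
      have h2 : V' t / ν (V t) ≤ 2 * δ * (V t / ν (V t)) - c := by
        have h3 : V' t / ν (V t) ≤ (2 * δ * V t - c * ν (V t)) / ν (V t) :=
          (div_le_div_iff_of_pos_right hn).mpr hV'
        have h4 : (2 * δ * V t - c * ν (V t)) / ν (V t)
            = 2 * δ * (V t / ν (V t)) - c := by
          field_simp
        linarith
      have h5 : 2 * δ * (V t / ν (V t)) ≤ 2 * δ * (1 / ν 1) :=
        mul_le_mul_of_nonneg_left hr (by positivity)
      have h6 : 1 / ν (V t) * V' t = V' t / ν (V t) := by ring
      have h7 : 2 * δ * (1 / ν 1) = 2 * δ / ν 1 := by ring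
      rw [h6, hκdef]
      linarith
    have hanti : AntitoneOn φ (Set.Icc a tstar) := by
      apply antitoneOn_of_deriv_nonpos (convex_Icc a tstar)
      · intro t ht
        exact (hderiv t ht).continuousAt.continuousWithinAt
      · rw [interior_Icc]
        intro t ht
        exact (hderiv t (Set.Ioo_subset_Icc_self ht)).differentiableAt.differentiableWithinAt
      · rw [interior_Icc]
        intro t ht
        rw [(hderiv t (Set.Ioo_subset_Icc_self ht)).deriv]
        exact hnp t (Set.Ioo_subset_Icc_self ht)
    have := hanti ⟨le_refl a, ha.2⟩ ⟨ha.2, le_refl tstar⟩ ha.2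
    simpa [hφdef] using this
  -- conclude
  by_contra hcon
  push_neg at hcon
  set S : Set ℝ := Set.Icc 0 tstar ∩ V ⁻¹' Set.Iic 1 with hSdef
  have hSbdd : BddAbove S := ⟨tstar, fun t ht => ht.1.2⟩
  rcases Set.eq_empty_or_nonempty S with hS | hS
  · -- V > 1 on all of [0, tstar]
    have hge : ∀ t ∈ Set.Icc 0 tstar, 1 ≤ V t := by
      intro t ht
      by_contra h
      push_neg at h
      exact (Set.eq_empty_iff_forall_notMem.mp hS t) ⟨ht, h.le⟩
    have h1 := main 0 ⟨le_refl 0, htnn⟩ (by simpa using hge)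
    have h2 := hFle (V 0) hV0.le
    have h3 := hFpos (V tstar) hcon
    simp only [mul_zero, add_zero] at h1
    linarith
  · -- S nonempty; let s0 = sSup S
    have hScl : IsClosed S := by
      have hVcont : ContinuousOn V (Set.Icc 0 tstar) := fun t ht =>
        (hd t ht.1).continuousAt.continuousWithinAt
      exact hVcont.preimage_isClosed_of_isClosed isClosed_Icc isClosed_Iic
    have hs0mem : sSup S ∈ S := hScl.csSup_mem hS hSbdd
    set s0 := sSup S with hs0def
    have hs0icc : s0 ∈ Set.Icc 0 tstar := hs0mem.1
    have hs0le1 : V s0 ≤ 1 := hs0mem.2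
    have hs0lt : s0 < tstar := by
      rcases lt_or_eq_of_le hs0icc.2 with h | h
      · exact h
      · exfalso; rw [h] at hs0le1; linarith
    have hgt : ∀ t, s0 < t → t ≤ tstar → 1 < V t := by
      intro t h1 h2
      by_contra h
      push_neg at h
      have : t ∈ S := ⟨⟨le_trans hs0icc.1 h1.le, h2⟩, h⟩
      exact absurd (le_csSup hSbdd this) (not_le.mpr h1)
    have hs0ge1 : 1 ≤ V s0 := by
      have htend : Filter.Tendsto V (nhdsWithin s0 (Set.Ioi s0)) (nhds (V s0)) :=
        ((hd s0 hs0icc.1).continuousAt.tendsto).mono_left nhdsWithin_le_nhds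
      have hev : ∀ᶠ t in nhdsWithin s0 (Set.Ioi s0), 1 ≤ V t := by
        filter_upwards [Ioc_mem_nhdsGT_of_mem ⟨le_refl s0, hs0lt⟩] with t ht
        exact (hgt t ht.1 ht.2).le
      exact ge_of_tendsto htend hev
    have hVs0 : V s0 = 1 := le_antisymm hs0le1 hs0ge1
    have hge : ∀ t ∈ Set.Icc s0 tstar, 1 ≤ V t := by
      intro t ht
      rcases eq_or_lt_of_le ht.1 with h | h
      · rw [← h]; exact hs0ge1
      · exact (hgt t h ht.2).le
    have h1 := main s0 hs0icc hge
    rw [hVs0, hF1] at h1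
    have h3 := hFpos (V tstar) hcon
    have : κ * tstar ≤ κ * s0 := by linarith
    have := (mul_le_mul_iff_right₀ hκ).mp this
    linarith
end

section
/- Let V : [0,∞) → [0,∞) be absolutely continuous and satisfy V'(t) ≤ -α V(t)^p for 0 < V(t) < 1 and V'(t) ≤ -β V(t)^q for V(t) ≥ 1, where α, β > 0, 0 < p < 1 < q. Then V(t) = 0 for all t ≥ 1/(α(1-p)) + 1/(β(q-1)), uniformly in V(0). -/
theorem power_fixed_time_stability
    (α β p q : ℝ) (hα : 0 < α) (hβ : 0 < β)
    (hp0 : 0 < p) (hp1 : p < 1) (hq : 1 < q)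
    (V V' : ℝ → ℝ) (hVnn : ∀ t ≥ (0:ℝ), 0 ≤ V t)
    (hd : ∀ t ≥ (0:ℝ), HasDerivAt V (V' t) t)
    (h1 : ∀ t ≥ (0:ℝ), 0 < V t → V t < 1 → V' t ≤ -α * (V t) ^ p)
    (h2 : ∀ t ≥ (0:ℝ), 1 ≤ V t → V' t ≤ -β * (V t) ^ q) :
    ∀ t ≥ 1 / (α * (1 - p)) + 1 / (β * (q - 1)), V t = 0 := by
  have hq1 : 0 < q - 1 := by linarith
  have hp1' : 0 < 1 - p := by linarith
  set Tq : ℝ := 1 / (β * (q - 1)) with hTq_def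
  set Tp : ℝ := 1 / (α * (1 - p)) with hTp_def
  have hTq : 0 < Tq := by positivity
  have hTp : 0 < Tp := by positivity
  have contV : ContinuousOn V (Set.Ici (0:ℝ)) := fun t ht =>
    ((hd t ht).continuousAt).continuousWithinAt
  -- V' t ≤ 0 for t > 0
  have hV'le : ∀ t > (0:ℝ), V' t ≤ 0 := by
    intro t ht
    rcases lt_or_eq_of_le (hVnn t ht.le) with hpos | hzero
    · rcases lt_or_ge (V t) 1 with hlt | hge
      · have hh := h1 t ht.le hpos hlt
        have hpow : 0 < V t ^ p := Real.rpow_pos_of_pos hpos p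
        nlinarith
      · have hh := h2 t ht.le hge
        have hpow : 0 < V t ^ q := Real.rpow_pos_of_pos (by linarith) q
        nlinarith
    · have hmin : IsLocalMin V t := by
        filter_upwards [Ioi_mem_nhds ht] with s hs
        rw [← hzero]; exact hVnn s (le_of_lt hs)
      have := hmin.hasDerivAt_eq_zero (hd t ht.le)
      linarith [this.le]
  -- V is antitone on Ici 0
  have anti : AntitoneOn V (Set.Ici (0:ℝ)) := by
    apply antitoneOn_of_deriv_nonpos (convex_Ici 0) contV
    · intro x hx
      rw [interior_Ici] at hx
      exact ((hd x (le_of_lt hx)).differentiableAt).differentiableWithinAt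
    · intro x hx
      rw [interior_Ici] at hx
      rw [(hd x (le_of_lt hx)).deriv]
      exact hV'le x hx
  -- Phase 1: V Tq < 1
  have phase1 : V Tq < 1 := by
    by_contra hcon
    push_neg at hcon
    have hge : ∀ s ∈ Set.Icc (0:ℝ) Tq, 1 ≤ V s := fun s hs =>
      le_trans hcon (anti (Set.mem_Ici.mpr hs.1) (Set.mem_Ici.mpr hTq.le) hs.2)
    set F : ℝ → ℝ := fun s => V s ^ (1 - q) - s * (β * (q - 1)) with hF
    have hderivF : ∀ x ∈ Set.Ioo (0:ℝ) Tq,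
        HasDerivAt F (V' x * (1 - q) * V x ^ (1 - q - 1) - β * (q - 1)) x := by
      intro x hx
      have hVx : 1 ≤ V x := hge x ⟨hx.1.le, hx.2.le⟩
      have h1' : HasDerivAt (fun s => V s ^ (1 - q))
          (V' x * (1 - q) * V x ^ (1 - q - 1)) x :=
        (hd x hx.1.le).rpow_const (Or.inl (by intro h; rw [h] at hVx; linarith))
      have h2' : HasDerivAt (fun s : ℝ => s * (β * (q - 1))) (β * (q - 1)) x := by
        simpa using hasDerivAt_mul_const (β * (q - 1))
      exact h1'.sub h2'
    have hmono : MonotoneOn F (Set.Icc (0:ℝ) Tq) := by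
      apply monotoneOn_of_deriv_nonneg (convex_Icc 0 Tq)
      · exact (ContinuousOn.rpow_const (contV.mono (fun s hs => hs.1))
          (fun s hs => Or.inl (by intro h; have := hge s hs; rw [h] at this; linarith))).sub
          ((continuous_id.mul continuous_const).continuousOn)
      · intro x hx
        rw [interior_Icc] at hx
        exact (hderivF x hx).differentiableAt.differentiableWithinAt
      · intro x hx
        rw [interior_Icc] at hx
        rw [(hderivF x hx).deriv]
        have hVx : 1 ≤ V x := hge x ⟨hx.1.le, hx.2.le⟩
        have hVpos : 0 < V x := by linarith
        have hder := h2 x hx.1.le hVx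
        have hc : 0 < V x ^ (1 - q - 1) := Real.rpow_pos_of_pos hVpos _
        have he : V x ^ (1 - q - 1) * V x ^ q = 1 := by
          rw [← Real.rpow_add hVpos]; norm_num
        have hmul := mul_le_mul_of_nonneg_left hder hc.le
        have hrw : V x ^ (1 - q - 1) * (-β * V x ^ q) = -β := by
          rw [show V x ^ (1 - q - 1) * (-β * V x ^ q)
            = -β * (V x ^ (1 - q - 1) * V x ^ q) by ring, he, mul_one]
        rw [hrw] at hmul
        nlinarith [mul_nonneg hq1.le
          (by linarith : (0:ℝ) ≤ -β - V x ^ (1 - q - 1) * V' x)]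
    have hle := hmono ⟨le_refl 0, hTq.le⟩ ⟨hTq.le, le_refl Tq⟩ hTq.le
    have hV0 : 1 ≤ V 0 := hge 0 ⟨le_refl 0, hTq.le⟩
    have hF0 : (0:ℝ) < F 0 := by
      simp only [hF, zero_mul, sub_zero]
      exact Real.rpow_pos_of_pos (by linarith) _
    have hFTq : F Tq ≤ 0 := by
      simp only [hF]
      have h1' : V Tq ^ (1 - q) ≤ 1 :=
        Real.rpow_le_one_of_one_le_of_nonpos hcon (by linarith)
      have h2' : Tq * (β * (q - 1)) = 1 := by
        rw [hTq_def]; field_simp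
      linarith
    linarith
  -- Phase 2: V (Tp + Tq) = 0
  have phase2 : V (Tp + Tq) = 0 := by
    by_contra hcon
    have hVT : 0 < V (Tp + Tq) :=
      lt_of_le_of_ne (hVnn _ (by linarith)) (Ne.symm hcon)
    have hbet : ∀ s ∈ Set.Icc Tq (Tp + Tq), 0 < V s ∧ V s < 1 := by
      intro s hs
      constructor
      · exact lt_of_lt_of_le hVT (anti (Set.mem_Ici.mpr (by linarith [hs.1]))
          (Set.mem_Ici.mpr (by linarith)) hs.2)
      · exact lt_of_le_of_lt (anti (Set.mem_Ici.mpr hTq.le)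
          (Set.mem_Ici.mpr (by linarith [hs.1])) hs.1) phase1
    set G : ℝ → ℝ := fun s => V s ^ (1 - p) + s * (α * (1 - p)) with hG
    have hderivG : ∀ x ∈ Set.Ioo Tq (Tp + Tq),
        HasDerivAt G (V' x * (1 - p) * V x ^ (1 - p - 1) + α * (1 - p)) x := by
      intro x hx
      obtain ⟨hx1, hx2⟩ := hbet x ⟨hx.1.le, hx.2.le⟩
      have h1' : HasDerivAt (fun s => V s ^ (1 - p))
          (V' x * (1 - p) * V x ^ (1 - p - 1)) x :=
        (hd x (by linarith [hx.1])).rpow_const (Or.inl (ne_of_gt hx1))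
      have h2' : HasDerivAt (fun s : ℝ => s * (α * (1 - p))) (α * (1 - p)) x := by
        simpa using hasDerivAt_mul_const (α * (1 - p))
      exact h1'.add h2'
    have hanti : AntitoneOn G (Set.Icc Tq (Tp + Tq)) := by
      apply antitoneOn_of_deriv_nonpos (convex_Icc _ _)
      · exact (ContinuousOn.rpow_const (contV.mono (fun s hs => le_trans hTq.le hs.1))
          (fun s hs => Or.inl (ne_of_gt (hbet s hs).1))).add
          ((continuous_id.mul continuous_const).continuousOn)
      · intro x hx
        rw [interior_Icc] at hx
        exact (hderivG x hx).differentiableAt.differentiableWithinAt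
      · intro x hx
        rw [interior_Icc] at hx
        rw [(hderivG x hx).deriv]
        obtain ⟨hx1, hx2⟩ := hbet x ⟨hx.1.le, hx.2.le⟩
        have hder := h1 x (by linarith [hx.1]) hx1 hx2
        have hc : 0 < V x ^ (1 - p - 1) := Real.rpow_pos_of_pos hx1 _
        have he : V x ^ (1 - p - 1) * V x ^ p = 1 := by
          rw [← Real.rpow_add hx1]; norm_num
        have hmul := mul_le_mul_of_nonneg_left hder hc.le
        have hrw : V x ^ (1 - p - 1) * (-α * V x ^ p) = -α := by
          rw [show V x ^ (1 - p - 1) * (-α * V x ^ p)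
            = -α * (V x ^ (1 - p - 1) * V x ^ p) by ring, he, mul_one]
        rw [hrw] at hmul
        nlinarith [mul_nonneg hp1'.le
          (by linarith : (0:ℝ) ≤ -α - V x ^ (1 - p - 1) * V' x)]
    have hle := hanti ⟨le_refl Tq, by linarith⟩ ⟨by linarith, le_refl _⟩ (by linarith)
    have hGT : V (Tp + Tq) ^ (1 - p) + (Tp + Tq) * (α * (1 - p)) ≤
        V Tq ^ (1 - p) + Tq * (α * (1 - p)) := hle
    have hVTq1 : V Tq ^ (1 - p) < 1 := by
      obtain ⟨h1', h2'⟩ := hbet Tq ⟨le_refl _, by linarith⟩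
      exact Real.rpow_lt_one h1'.le h2' hp1'
    have hTpval : Tp * (α * (1 - p)) = 1 := by
      rw [hTp_def]; field_simp
    have hpos : 0 < V (Tp + Tq) ^ (1 - p) := Real.rpow_pos_of_pos hVT _
    nlinarith
  -- Conclusion
  intro t ht
  have hT : (0:ℝ) ≤ Tp + Tq := by linarith
  have ht' : Tp + Tq ≤ t := by rw [hTp_def, hTq_def] at *; linarith
  have hmono := anti (Set.mem_Ici.mpr hT) (Set.mem_Ici.mpr (le_trans hT ht')) ht'
  have hnn := hVnn t (le_trans hT ht')
  rw [phase2] at hmono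
  linarith
end

section
/- Let f : ℝⁿ → ℝⁿ satisfy the one-sided Lipschitz condition (u-v)ᵀ(f(u)-f(v)) ≤ δ (u-v)ᵀ(u-v) for all u,v ∈ ℝⁿ and some δ > 0. Let x₁,…,x_N : [0,∞) → ℝⁿ be differentiable, x*(t) their average, and suppose ẋᵢ = f(xᵢ) + gᵢ(t) where Σᵢ gᵢ(t) = 0. Then the derivative of V(t) = (1/2)Σᵢ‖xᵢ(t)-x*(t)‖² satisfies V̇(t) ≤ 2δ V(t) + Σᵢ (xᵢ - x*)ᵀ gᵢ(t). -/
theorem drift_estimate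
    (N n : ℕ) (hN : 0 < N)
    (f : EuclideanSpace ℝ (Fin n) → EuclideanSpace ℝ (Fin n))
    (δ : ℝ) (hδ : 0 < δ)
    (hquad : ∀ u v : EuclideanSpace ℝ (Fin n),
      (inner ℝ (u - v) (f u - f v) : ℝ) ≤ δ * (inner ℝ (u - v) (u - v) : ℝ))
    (x : Fin N → ℝ → EuclideanSpace ℝ (Fin n))
    (g : Fin N → ℝ → EuclideanSpace ℝ (Fin n))
    (hg : ∀ t : ℝ, ∑ i, g i t = 0)
    (hode : ∀ t ≥ (0:ℝ), ∀ i, HasDerivAt (x i) (f (x i t) + g i t) t)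
    (xstar : ℝ → EuclideanSpace ℝ (Fin n))
    (hxstar : ∀ t, xstar t = (N : ℝ)⁻¹ • ∑ i, x i t)
    (V : ℝ → ℝ)
    (hV : ∀ t, V t = (1 / 2) * ∑ i, ‖x i t - xstar t‖ ^ 2) :
    ∀ t ≥ (0:ℝ),
      deriv V t ≤ 2 * δ * V t + ∑ i, (inner ℝ (x i t - xstar t) (g i t) : ℝ) := by
  intro t ht
  set c : EuclideanSpace ℝ (Fin n) := (N:ℝ)⁻¹ • ∑ i, (f (x i t) + g i t) with hc
  have hxs : HasDerivAt xstar c t := by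
    have h1 : HasDerivAt (fun s => (N:ℝ)⁻¹ • ∑ i, x i s) c t :=
      by have := (HasDerivAt.fun_sum (u := Finset.univ) fun i _ => hode t ht i).const_smul (N:ℝ)⁻¹; exact this
    exact h1.congr_of_eventuallyEq (Filter.Eventually.of_forall fun s => hxstar s)
  have he : ∀ i : Fin N, HasDerivAt (fun s => x i s - xstar s)
      (f (x i t) + g i t - c) t := fun i => (hode t ht i).sub hxs
  have hVd : HasDerivAt V
      (∑ i, (inner ℝ (x i t - xstar t) (f (x i t) + g i t - c) : ℝ)) t := by
    have h1 : HasDerivAt (fun s => (1/2 : ℝ) * ∑ i,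
        (inner ℝ (x i s - xstar s) (x i s - xstar s) : ℝ))
        ((1/2) * ∑ i, ((inner ℝ (x i t - xstar t) (f (x i t) + g i t - c) : ℝ)
          + (inner ℝ (f (x i t) + g i t - c) (x i t - xstar t) : ℝ))) t :=
      ((HasDerivAt.fun_sum fun i _ => (he i).inner ℝ (he i))).const_mul _
    have h2 : V = fun s => (1/2 : ℝ) * ∑ i,
        (inner ℝ (x i s - xstar s) (x i s - xstar s) : ℝ) := by
      funext s
      rw [hV s]
      congr 1
      refine Finset.sum_congr rfl fun i _ => ?_
      rw [real_inner_self_eq_norm_sq]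
    rw [h2]
    convert h1 using 1
    rw [Finset.mul_sum]
    refine Finset.sum_congr rfl fun i _ => ?_
    rw [real_inner_comm (f (x i t) + g i t - c)]
    ring
  rw [hVd.deriv]
  have hsum : ∑ i : Fin N, (x i t - xstar t) = 0 := by
    rw [Finset.sum_sub_distrib, Finset.sum_const, Finset.card_univ, Fintype.card_fin,
      hxstar]
    rw [← Nat.cast_smul_eq_nsmul ℝ, smul_smul]
    rw [mul_inv_cancel₀ (by exact_mod_cast hN.ne' : (N:ℝ) ≠ 0), one_smul, sub_self]
  have key : ∀ i : Fin N,
      (inner ℝ (x i t - xstar t) (f (x i t) + g i t - c) : ℝ)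
      = (inner ℝ (x i t - xstar t) (f (x i t) - f (xstar t)) : ℝ)
        + (inner ℝ (x i t - xstar t) (g i t) : ℝ)
        + (inner ℝ (x i t - xstar t) (f (xstar t) - c) : ℝ) := by
    intro i
    rw [← inner_add_right, ← inner_add_right]
    congr 1
    abel
  have hzero : ∑ i, (inner ℝ (x i t - xstar t) (f (xstar t) - c) : ℝ) = 0 := by
    rw [← sum_inner (𝕜 := ℝ), hsum, inner_zero_left]
  calc ∑ i, (inner ℝ (x i t - xstar t) (f (x i t) + g i t - c) : ℝ)
      = ∑ i, ((inner ℝ (x i t - xstar t) (f (x i t) - f (xstar t)) : ℝ)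
        + (inner ℝ (x i t - xstar t) (g i t) : ℝ))
        + ∑ i, (inner ℝ (x i t - xstar t) (f (xstar t) - c) : ℝ) := by
        rw [← Finset.sum_add_distrib]
        exact Finset.sum_congr rfl fun i _ => key i
    _ = ∑ i, ((inner ℝ (x i t - xstar t) (f (x i t) - f (xstar t)) : ℝ)
        + (inner ℝ (x i t - xstar t) (g i t) : ℝ)) := by rw [hzero, add_zero]
    _ = ∑ i, (inner ℝ (x i t - xstar t) (f (x i t) - f (xstar t)) : ℝ)
        + ∑ i, (inner ℝ (x i t - xstar t) (g i t) : ℝ) := Finset.sum_add_distrib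
    _ ≤ ∑ i, δ * (inner ℝ (x i t - xstar t) (x i t - xstar t) : ℝ)
        + ∑ i, (inner ℝ (x i t - xstar t) (g i t) : ℝ) := by
        gcongr with i _
        exact hquad (x i t) (xstar t)
    _ ≤ 2 * δ * V t + ∑ i, (inner ℝ (x i t - xstar t) (g i t) : ℝ) := by
        gcongr ?_ + _
        apply le_of_eq
        rw [hV, ← Finset.mul_sum]
        have h3 : ∀ i : Fin N, (inner ℝ (x i t - xstar t) (x i t - xstar t) : ℝ)
            = ‖x i t - xstar t‖^2 := fun i => real_inner_self_eq_norm_sq _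
        simp_rw [h3]
        ring
end
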